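/- Let V be a real vector space with 3 ≤ dim V < ∞, let w ∈ V be a fixed vector, and let P : V × V → V be a symmetric bilinear map such that for every v ∈ V there exist scalars a, b ∈ ℝ with P(v,v) = a • v + b • w. Then there exist a linear functional ψ : V → ℝ and a symmetric bilinear form σ : V × V → ℝ such that P(u,v) = ψ(u) • v + ψ(v) • u + σ(u,v) • w for all u, v ∈ V. (This is the algebraic classification of the deformation tensors P^α_{βγ} = ψ_(β δ^α_γ) + σ_{βγ} φ^α characterizing na₍₃₎-maps, the fourth class in the paper's Theorem 2.) -/
import Mathlib

open Module Submodule

/-- Two vectors are independent. -/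
def Ind2 {W : Type*} [AddCommGroup W] [Module ℝ W] (x y : W) : Prop :=
  ∀ a b : ℝ, a • x + b • y = 0 → a = 0 ∧ b = 0

section IndLemmas
variable {W : Type*} [AddCommGroup W] [Module ℝ W]

lemma Ind2.symm {x y : W} (h : Ind2 x y) : Ind2 y x := fun a b hab => by
  obtain ⟨h1, h2⟩ := h b a (by rw [← hab]; abel)
  exact ⟨h2, h1⟩

lemma Ind2.left_ne {x y : W} (h : Ind2 x y) : x ≠ 0 := by
  intro hx
  simpa using (h 1 0 (by simp [hx])).1

lemma Ind2.lin {x y : W} (h : Ind2 x y) (p q r s : ℝ) (hd : p * s - q * r ≠ 0) :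
    Ind2 (p • x + q • y) (r • x + s • y) := by
  intro a b hab
  have key : (a * p + b * r) • x + (a * q + b * s) • y = 0 := by
    rw [← hab]; module
  obtain ⟨h1, h2⟩ := h _ _ key
  constructor
  · have ha : a * (p * s - q * r) = 0 := by linear_combination s * h1 - r * h2
    rcases mul_eq_zero.1 ha with h | h
    · exact h
    · exact absurd h hd
  · have hb : b * (p * s - q * r) = 0 := by linear_combination p * h2 - q * h1
    rcases mul_eq_zero.1 hb with h | h
    · exact h
    · exact absurd h hd

lemma not_ind2 {x y : W} (hx : x ≠ 0) (h : ¬ Ind2 x y) : ∃ c : ℝ, y = c • x := by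
  rw [Ind2] at h
  push_neg at h
  obtain ⟨a, b, hab, hne⟩ := h
  by_cases hb : b = 0
  · exfalso
    subst hb
    simp only [zero_smul, add_zero] at hab
    rcases smul_eq_zero.1 hab with h | h
    · exact hne h rfl
    · exact hx h
  · refine ⟨-a / b, ?_⟩
    have h2 : b • y = (-a) • x := by
      rw [neg_smul, eq_neg_iff_add_eq_zero, add_comm]; exact hab
    calc y = b⁻¹ • (b • y) := by rw [inv_smul_smul₀ hb]
      _ = (-a / b) • x := by rw [h2, smul_smul]; ring_nf

lemma exists_ind2_of_ne [FiniteDimensional ℝ W] (hW : 2 ≤ finrank ℝ W) {x : W} (hx : x ≠ 0) :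
    ∃ y, Ind2 x y := by
  have hne : (ℝ ∙ x) ≠ ⊤ := by
    intro h
    have h1 : finrank ℝ (ℝ ∙ x) = 1 := finrank_span_singleton hx
    rw [h, finrank_top] at h1
    omega
  obtain ⟨y, hy⟩ : ∃ y, y ∉ ℝ ∙ x := by
    by_contra h
    push_neg at h
    exact hne (eq_top_iff.2 fun z _ => h z)
  refine ⟨y, fun a b hab => ?_⟩
  by_cases hb : b = 0
  · subst hb
    simp only [zero_smul, add_zero] at hab
    rcases smul_eq_zero.1 hab with h | h
    · exact ⟨h, rfl⟩
    · exact absurd h hx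
  · exfalso
    apply hy
    have : y = (-a / b) • x := by
      have h2 : b • y = (-a) • x := by
        rw [neg_smul, eq_neg_iff_add_eq_zero, add_comm]; exact hab
      calc y = b⁻¹ • (b • y) := by rw [inv_smul_smul₀ hb]
        _ = (-a / b) • x := by rw [h2, smul_smul]; ring_nf
    exact this ▸ smul_mem _ _ (mem_span_singleton_self x)

lemma exists_dual_one {x : W} (hx : x ≠ 0) : ∃ g : W →ₗ[ℝ] ℝ, g x = 1 := by
  have : ¬ ∀ φ : Module.Dual ℝ W, φ x = 0 := by
    rw [Module.forall_dual_apply_eq_zero_iff]; exact hx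
  push_neg at this
  obtain ⟨φ, hφ⟩ := this
  exact ⟨(φ x)⁻¹ • φ, by simp [inv_mul_cancel₀ hφ]⟩

end IndLemmas

theorem main_aux {V W : Type*} [AddCommGroup V] [Module ℝ V] [AddCommGroup W] [Module ℝ W]
    [FiniteDimensional ℝ W] (hW : 2 ≤ finrank ℝ W)
    (π : V →ₗ[ℝ] W) (hπ : Function.Surjective π)
    (Q : V →ₗ[ℝ] V →ₗ[ℝ] W) (hs : ∀ u v, Q u v = Q v u)
    (hq : ∀ v, ∃ a : ℝ, Q v v = a • π v) :
    ∃ ψ : V →ₗ[ℝ] ℝ, ∀ u v, Q u v = ψ u • π v + ψ v • π u := by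
  classical
  -- the diagonal coefficient function
  set f : V → ℝ := fun v => (hq v).choose with hfdef
  have hf : ∀ v, Q v v = f v • π v := fun v => (hq v).choose_spec
  have huniq : ∀ v, π v ≠ 0 → ∀ a : ℝ, Q v v = a • π v → a = f v := by
    intro v hv a ha
    have h0 : (a - f v) • π v = 0 := by
      rw [sub_smul, ← ha, ← hf v, sub_self]
    rcases smul_eq_zero.1 h0 with h | h
    · exact sub_eq_zero.1 h
    · exact absurd h hv
  -- f is odd where defined
  have hneg : ∀ z, π z ≠ 0 → f (-z) = - f z := by
    intro z hz
    have h1 : Q (-z) (-z) = (- f z) • π (-z) := by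
      simp only [map_neg, LinearMap.neg_apply, neg_smul, smul_neg, neg_neg]
      exact hf z
    have h2 := huniq (-z) (by simpa using hz) _ h1
    exact h2.symm
  -- expansions of the diagonal
  have exp1 : ∀ u v : V, Q (u+v) (u+v) = Q u u + Q u v + Q u v + Q v v := by
    intro u v
    simp only [map_add, LinearMap.add_apply, hs v u]
    abel
  have exp2 : ∀ u v : V, Q (u-v) (u-v) = Q u u - Q u v - Q u v + Q v v := by
    intro u v
    simp only [map_sub, LinearMap.sub_apply, hs v u]
    abel
  -- f is additive on independent pairs
  have hadd : ∀ u v, Ind2 (π u) (π v) → f (u + v) = f u + f v := by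
    intro u v hind
    have h1 : Q u u + Q u v + Q u v + Q v v = f (u+v) • π u + f (u+v) • π v := by
      rw [← exp1, hf (u+v), map_add, smul_add]
    have h2 : Q u u - Q u v - Q u v + Q v v = f (u-v) • π u - f (u-v) • π v := by
      rw [← exp2, hf (u-v), map_sub, smul_sub]
    have h3 := hf u
    have h4 := hf v
    have e : (f (u+v) + f (u-v) - 2 * f u) • π u + (f (u+v) - f (u-v) - 2 * f v) • π v = 0 := by
      linear_combination (norm := module) (2:ℝ) • h3 + (2:ℝ) • h4 - h1 - h2
    obtain ⟨e1, e2⟩ := hind _ _ e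
    linarith
  -- key polarization identity on independent pairs
  have h2Q : ∀ u v, Ind2 (π u) (π v) → (2:ℝ) • Q u v = f v • π u + f u • π v := by
    intro u v hind
    have h1 : Q u u + Q u v + Q u v + Q v v = (f u + f v) • (π u + π v) := by
      rw [← exp1, hf (u+v), hadd u v hind, map_add]
    have h3 := hf u
    have h4 := hf v
    linear_combination (norm := module) h1 - h3 - h4
  -- pick a base vector and dual functional
  obtain ⟨x0, hx0⟩ : ∃ x0 : W, x0 ≠ 0 := by
    have : Nontrivial W := by
      apply Module.nontrivial_of_finrank_pos (R := ℝ); omega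
    exact exists_ne 0
  obtain ⟨v0, hv0⟩ := hπ x0
  have hv0ne : π v0 ≠ 0 := by rw [hv0]; exact hx0
  obtain ⟨g, hg⟩ := exists_dual_one (x := π v0) hv0ne
  -- the linear functional ψ
  set ψ : V →ₗ[ℝ] ℝ := g ∘ₗ (Q v0) - (f v0 / 2) • (g ∘ₗ π) with hψdef
  have hψ : ∀ u, ψ u = g (Q u v0) - (f v0 / 2) * g (π u) := by
    intro u
    simp only [hψdef, LinearMap.sub_apply, LinearMap.smul_apply, LinearMap.comp_apply,
      smul_eq_mul, hs v0 u]
  -- ψ computes f/2 on vectors independent from v0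
  have hψ1 : ∀ u, Ind2 (π u) (π v0) → f u = 2 * ψ u := by
    intro u hind
    have h1 := h2Q u v0 hind
    have h2 := congrArg g h1
    simp only [map_smul, map_add, smul_eq_mul, hg] at h2
    rw [hψ u]
    linarith
  -- ψ computes f/2 on all vectors with nonzero image
  have hψ2 : ∀ u, π u ≠ 0 → f u = 2 * ψ u := by
    intro u hu
    by_cases hind : Ind2 (π u) (π v0)
    · exact hψ1 u hind
    · have hind' : ¬ Ind2 (π v0) (π u) := fun h => hind h.symm
      obtain ⟨c, hc⟩ := not_ind2 hv0ne hind'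
      have hcne : c ≠ 0 := by
        intro h; rw [h, zero_smul] at hc; exact hu hc
      obtain ⟨y, hy⟩ := exists_ind2_of_ne hW hv0ne
      obtain ⟨z, hz⟩ := hπ y
      have hπz : π z = y := hz
      have hz1 : Ind2 (π z) (π v0) := by rw [hπz]; exact hy.symm
      have hzne : π z ≠ 0 := hz1.left_ne
      have hz2 : Ind2 (π (u + z)) (π v0) := by
        have h := hy.lin c 1 1 0 (by norm_num)
        simp only [one_smul, zero_smul, smul_zero, add_zero, zero_add] at h
        rw [map_add, hc, hπz]
        exact h
      have hz3 : Ind2 (π (u + z)) (π (-z)) := by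
        have h := hy.lin c 1 0 (-1) (by simpa using hcne)
        simp only [one_smul, zero_smul, zero_add, neg_smul, neg_one_smul] at h
        rw [map_add, map_neg, hc, hπz]
        exact h
      have hfu : f u = f (u + z) + f (-z) := by
        have h := hadd (u + z) (-z) hz3
        rw [show u + z + -z = u from by abel] at h
        exact h
      have h5 := hneg z hzne
      have h6 := hψ1 (u + z) hz2
      have h7 := hψ1 z hz1
      have h8 : ψ (u + z) = ψ u + ψ z := map_add ψ u z
      rw [hfu, h5, h6, h7, h8]
      ring
  -- the identity on independent pairs
  have G1 : ∀ u v, Ind2 (π u) (π v) → Q u v = ψ u • π v + ψ v • π u := by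
    intro u v hind
    have h1 := h2Q u v hind
    have hfu := hψ2 u hind.left_ne
    have hfv := hψ2 v hind.symm.left_ne
    rw [hfu, hfv] at h1
    have h2 : (2:ℝ) • Q u v = (2:ℝ) • (ψ u • π v + ψ v • π u) := by
      rw [h1]; module
    exact smul_right_injective W two_ne_zero h2
  -- symmetry of the goal
  have Gs : ∀ u v, Q v u = ψ v • π u + ψ u • π v → Q u v = ψ u • π v + ψ v • π u := by
    intro u v h
    rw [hs u v, h]; abel
  -- combination step
  have Gc : ∀ u v z, Q u (v + z) = ψ u • π (v + z) + ψ (v + z) • π u →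
      Q u z = ψ u • π z + ψ z • π u → Q u v = ψ u • π v + ψ v • π u := by
    intro u v z h1 h2
    have h3 : Q u v = Q u (v + z) - Q u z := by rw [map_add]; abel
    rw [h3, h1, h2, map_add, map_add]
    simp only [smul_add, add_smul]
    abel
  -- extend to first argument nonzero
  have G2 : ∀ u v, π u ≠ 0 → Q u v = ψ u • π v + ψ v • π u := by
    intro u v hu
    by_cases hind : Ind2 (π u) (π v)
    · exact G1 u v hind
    · obtain ⟨c, hc⟩ := not_ind2 hu hind
      obtain ⟨y, hy⟩ := exists_ind2_of_ne hW hu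
      obtain ⟨z, hz⟩ := hπ y
      have hIz : Ind2 (π u) (π z) := by rw [hz]; exact hy
      have hIvz : Ind2 (π u) (π (v + z)) := by
        have h := hy.lin 1 0 c 1 (by norm_num)
        simp only [one_smul, zero_smul, add_zero, smul_zero] at h
        rw [map_add, hc, hz]
        exact h
      exact Gc u v z (G1 u (v + z) hIvz) (G1 u z hIz)
  -- all cases
  refine ⟨ψ, fun u v => ?_⟩
  by_cases hu : π u = 0
  · by_cases hv : π v = 0
    · obtain ⟨z, hz⟩ := hπ x0
      have hzne : π z ≠ 0 := by rw [hz]; exact hx0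
      have e2 : Q u z = ψ u • π z + ψ z • π u := Gs u z (G2 z u hzne)
      have e1 : Q u (v + z) = ψ u • π (v + z) + ψ (v + z) • π u := by
        apply Gs
        apply G2
        rw [map_add, hv, zero_add]
        exact hzne
      exact Gc u v z e1 e2
    · exact Gs u v (G2 v u hv)
  · exact G2 u v hu

/-- classification of na₍₃₎-map deformation tensors: if `dim V ≥ 3`,
`w : V` is fixed, and `P` is a symmetric bilinear map with `P v v ∈ span {v, w}`
for every `v`, then `P u v = ψ u • v + ψ v • u + σ u v • w` for some linear
functional `ψ` and symmetric bilinear form `σ`. -/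
theorem stmt_1 (V : Type*) [AddCommGroup V] [Module ℝ V] [FiniteDimensional ℝ V]
    (h3 : 3 ≤ Module.finrank ℝ V) (w : V)
    (P : V →ₗ[ℝ] V →ₗ[ℝ] V) (hsymm : ∀ u v : V, P u v = P v u)
    (hprop : ∀ v : V, ∃ a b : ℝ, P v v = a • v + b • w) :
    ∃ (ψ : V →ₗ[ℝ] ℝ) (σ : V →ₗ[ℝ] V →ₗ[ℝ] ℝ),
      (∀ u v : V, σ u v = σ v u) ∧
      ∀ u v : V, P u v = ψ u • v + ψ v • u + σ u v • w := by
  classical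
  set S : Submodule ℝ V := ℝ ∙ w with hSdef
  set π : V →ₗ[ℝ] (V ⧸ S) := S.mkQ with hπdef
  have hπsurj : Function.Surjective π := Submodule.mkQ_surjective S
  have hπw : π w = 0 := by
    rw [hπdef, Submodule.mkQ_apply, Submodule.Quotient.mk_eq_zero]
    exact Submodule.mem_span_singleton_self w
  have hSle : finrank ℝ S ≤ 1 := by
    by_cases hw : w = 0
    · rw [hSdef, hw, Submodule.span_zero_singleton]; simp
    · rw [hSdef, finrank_span_singleton hw]
  have hW : 2 ≤ finrank ℝ (V ⧸ S) := by
    have h := S.finrank_quotient_add_finrank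
    omega
  set Q : V →ₗ[ℝ] V →ₗ[ℝ] (V ⧸ S) := P.compr₂ π with hQdef
  have hQapp : ∀ u v, Q u v = π (P u v) := fun u v => rfl
  have hQs : ∀ u v, Q u v = Q v u := by
    intro u v; rw [hQapp, hQapp, hsymm u v]
  have hq : ∀ v, ∃ a : ℝ, Q v v = a • π v := by
    intro v
    obtain ⟨a, b, hab⟩ := hprop v
    exact ⟨a, by rw [hQapp, hab, map_add, map_smul, map_smul, hπw, smul_zero, add_zero]⟩
  obtain ⟨ψ, hψ⟩ := main_aux hW π hπsurj Q hQs hq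
  -- a functional that picks the coefficient of w
  obtain ⟨fw, hfw⟩ : ∃ fw : V →ₗ[ℝ] ℝ, w ≠ 0 → fw w = 1 := by
    by_cases hw : w = 0
    · exact ⟨0, fun h => absurd hw h⟩
    · obtain ⟨g, hg⟩ := exists_dual_one hw
      exact ⟨g, fun _ => hg⟩
  have hspan : ∀ x ∈ S, x = fw x • w := by
    intro x hx
    rw [hSdef] at hx
    obtain ⟨c, hc⟩ := Submodule.mem_span_singleton.1 hx
    by_cases hw : w = 0
    · simp [← hc, hw]
    · rw [← hc, map_smul, smul_eq_mul, hfw hw, mul_one]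
  -- the residual bilinear form
  set σ : V →ₗ[ℝ] V →ₗ[ℝ] ℝ :=
    P.compr₂ fw - LinearMap.mk₂ ℝ (fun u v => ψ u * fw v + ψ v * fw u)
      (fun m₁ m₂ n => by simp only [map_add]; ring)
      (fun c m n => by simp only [map_smul, smul_eq_mul]; ring)
      (fun m n₁ n₂ => by simp only [map_add]; ring)
      (fun c m n => by simp only [map_smul, smul_eq_mul]; ring) with hσdef
  have hσapp : ∀ u v, σ u v = fw (P u v) - (ψ u * fw v + ψ v * fw u) := by
    intro u v
    simp only [hσdef, LinearMap.sub_apply, LinearMap.compr₂_apply, LinearMap.mk₂_apply]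
  refine ⟨ψ, σ, fun u v => ?_, fun u v => ?_⟩
  · rw [hσapp, hσapp, hsymm u v]; ring
  · have hT : P u v - ψ u • v - ψ v • u ∈ S := by
      rw [← Submodule.Quotient.mk_eq_zero, ← Submodule.mkQ_apply, ← hπdef]
      rw [map_sub, map_sub, map_smul, map_smul, ← hQapp, hψ u v]
      abel
    have hTw := hspan _ hT
    have hfwT : fw (P u v - ψ u • v - ψ v • u) = σ u v := by
      rw [map_sub, map_sub, map_smul, map_smul, hσapp]
      simp only [smul_eq_mul]
      ring
    rw [hfwT] at hTw
    rw [show P u v = (P u v - ψ u • v - ψ v • u) + ψ u • v + ψ v • u from by abel, hTw]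
    abel
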